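/- Let r > 1 be odd, ω an r-th root of unity, s ≥ 1 with 2^s ≡ 1 (mod r), t̃(n) = s₂(n) mod 2, T̃(n; ω) = ∑_{m=0}^{n-1} t̃(m)·ω^m, and C = ∏_{i=0}^{s-1}(1 - ω^{2^i}). Then for all n ≥ 1, T̃(2^s·n; ω) = C·T̃(n; ω) + (1 - C)·(ω^n - 1)/(2(ω - 1)) whenever ω ≠ 1. -/

import Mathlib

open Finset

/-- Binary digit sum of `n`. -/
def s₂ (n : ℕ) : ℕ := (Nat.digits 2 n).sum

/-- `T̃(n; z) = ∑_{m=0}^{n-1} (s₂(m) mod 2) z^m ∈ ℂ`. -/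
noncomputable def tmTildeEval (n : ℕ) (z : ℂ) : ℂ :=
  ∑ m ∈ Finset.range n, ((s₂ m % 2 : ℕ) : ℂ) * z ^ m

noncomputable def tmEval (n : ℕ) (z : ℂ) : ℂ :=
  ∑ m ∈ Finset.range n, (-1 : ℂ) ^ (s₂ m) * z ^ m

lemma s₂_zero : s₂ 0 = 0 := by simp [s₂]

lemma s₂_eq (n : ℕ) (hn : n ≠ 0) : s₂ n = n % 2 + s₂ (n / 2) := by
  unfold s₂
  rw [Nat.digits_def' (by norm_num : 1 < 2) (Nat.pos_of_ne_zero hn)]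
  simp

lemma s₂_add (s : ℕ) : ∀ q j : ℕ, j < 2 ^ s → s₂ (2 ^ s * q + j) = s₂ q + s₂ j := by
  induction s with
  | zero =>
    intro q j hj
    interval_cases j
    simp [s₂_zero]
  | succ s ih =>
    intro q j hj
    rcases Nat.eq_zero_or_pos (2 ^ (s+1) * q + j) with h | h
    · have h2 : (0:ℕ) < 2 ^ (s+1) := Nat.pow_pos (by norm_num)
      have hq : q = 0 := by nlinarith [Nat.eq_zero_of_add_eq_zero_right h]
      have hj0 : j = 0 := by omega
      simp [hq, hj0, s₂_zero]
    · rw [s₂_eq _ h.ne']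
      have hrw : 2 ^ (s+1) * q + j = 2 * (2 ^ s * q) + j := by ring
      have hmod : (2 ^ (s+1) * q + j) % 2 = j % 2 := by
        rw [hrw, Nat.mul_add_mod]
      have hdiv : (2 ^ (s+1) * q + j) / 2 = 2 ^ s * q + j / 2 := by
        rw [hrw, Nat.mul_add_div (by norm_num)]
      rw [hmod, hdiv, ih q (j / 2) (by rw [pow_succ] at hj; omega)]
      rcases Nat.eq_zero_or_pos j with hj0 | hj0
      · simp [hj0, s₂_zero]
      · rw [s₂_eq j hj0.ne']
        ring
  
lemma sum_range_add' (f : ℕ → ℂ) (m n : ℕ) :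
    ∑ i ∈ range (m + n), f i = (∑ i ∈ range m, f i) + ∑ i ∈ range n, f (m + i) :=
  Finset.sum_range_add f m n

lemma tm_pow (s : ℕ) (z : ℂ) : tmEval (2 ^ s) z = ∏ i ∈ range s, (1 - z ^ 2 ^ i) := by
  induction s with
  | zero => simp [tmEval, s₂_zero]
  | succ s ih =>
    rw [Finset.prod_range_succ, ← ih]
    unfold tmEval
    rw [pow_succ, mul_two, Finset.sum_range_add]
    have key : ∀ j ∈ range (2 ^ s),
        (-1 : ℂ) ^ (s₂ (2 ^ s + j)) * z ^ (2 ^ s + j)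
          = -(z ^ 2 ^ s) * ((-1 : ℂ) ^ (s₂ j) * z ^ j) := by
      intro j hj
      rw [Finset.mem_range] at hj
      have : s₂ (2 ^ s + j) = 1 + s₂ j := by
        have h1 : s₂ 1 = 1 := by simp [s₂]
        simpa [h1] using s₂_add s 1 j hj
      rw [this, pow_add, pow_add]
      norm_num
      ring
    rw [Finset.sum_congr rfl key, ← Finset.mul_sum]
    ring

lemma tm_mul (s : ℕ) (ω : ℂ) (hωs : ω ^ 2 ^ s = ω) (n : ℕ) :
    tmEval (2 ^ s * n) ω = tmEval (2 ^ s) ω * tmEval n ω := by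
  induction n with
  | zero => simp [tmEval]
  | succ n ih =>
    have hpow : ω ^ (2 ^ s * n) = ω ^ n := by
      rw [pow_mul, hωs]
    unfold tmEval at ih ⊢
    rw [Nat.mul_succ, Finset.sum_range_add, ih]
    have key : ∀ j ∈ range (2 ^ s),
        (-1 : ℂ) ^ (s₂ (2 ^ s * n + j)) * ω ^ (2 ^ s * n + j)
          = ((-1 : ℂ) ^ (s₂ n) * ω ^ n) * ((-1 : ℂ) ^ (s₂ j) * ω ^ j) := by
      intro j hj
      rw [Finset.mem_range] at hj
      rw [s₂_add s n j hj, pow_add, pow_add, hpow]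
      ring
    rw [Finset.sum_congr rfl key, ← Finset.mul_sum, Finset.sum_range_succ]
    ring

lemma tmTilde_eq (n : ℕ) (z : ℂ) :
    tmTildeEval n z * 2 = (∑ m ∈ range n, z ^ m) - tmEval n z := by
  unfold tmTildeEval tmEval
  rw [Finset.sum_mul, ← Finset.sum_sub_distrib]
  apply Finset.sum_congr rfl
  intro m _
  rcases Nat.even_or_odd (s₂ m) with he | ho
  · rw [Nat.even_iff.mp he, he.neg_one_pow]
    norm_num
  · rw [Nat.odd_iff.mp ho, ho.neg_one_pow]
    push_cast
    ring

theorem tmTildeEval_recurrence (r : ℕ) (hr : 1 < r) (hodd : Odd r) (ω : ℂ)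
    (hω : ω ^ r = 1) (hω1 : ω ≠ 1) (s : ℕ) (hs : 1 ≤ s) (hmod : 2 ^ s ≡ 1 [MOD r])
    (C : ℂ) (hC : C = ∏ i ∈ Finset.range s, (1 - ω ^ (2 ^ i))) :
    ∀ n : ℕ, 1 ≤ n →
      tmTildeEval (2 ^ s * n) ω =
        C * tmTildeEval n ω + (1 - C) * (ω ^ n - 1) / (2 * (ω - 1)) := by
  intro n hn
  have hωs : ω ^ 2 ^ s = ω := by
    have h1 : 2 ^ s % r = 1 := by
      have := hmod
      unfold Nat.ModEq at this
      rwa [Nat.mod_eq_of_lt hr] at this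
    conv_lhs => rw [← Nat.div_add_mod (2 ^ s) r]
    rw [pow_add, pow_mul, hω, one_pow, h1, pow_one, one_mul]
  have hC' : C = tmEval (2 ^ s) ω := by rw [tm_pow, hC]
  have hωn : ω ^ (2 ^ s * n) = ω ^ n := by rw [pow_mul, hωs]
  have hG : ∀ k : ℕ, ∑ m ∈ range k, ω ^ m = (ω ^ k - 1) / (ω - 1) := fun k =>
    geom_sum_eq hω1 k
  have hω1' : ω - 1 ≠ 0 := sub_ne_zero.mpr hω1
  have e1 := tmTilde_eq (2 ^ s * n) ω
  have e2 := tmTilde_eq n ω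
  rw [tm_mul s ω hωs n, ← hC', hG, hωn] at e1
  rw [hG] at e2
  have hTn : tmEval n ω = (ω ^ n - 1) / (ω - 1) - tmTildeEval n ω * 2 := by
    linear_combination e2
  rw [hTn] at e1
  rw [show (1 - C) * (ω ^ n - 1) / (2 * (ω - 1))
      = (1 - C) * ((ω ^ n - 1) / (ω - 1)) / 2 by
        rw [← mul_div_assoc, div_div, mul_comm (ω - 1) 2]]
  linear_combination e1 / 2
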